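/- Let n ≥ 2, let s = s_n be the n-th Sylvester number, let a_{n+1} = (s^2 - s + 2)/4 if n is even and a_{n+1} = (s^2 - 3s + 4)/4 if n is odd, let a_n = (s - 2) a_{n+1} + (s - 1), and let x = 1 + a_n + a_{n+1}. Then gcd(a_{n+1}, x) = 1. -/

import Mathlib

def sylvester : ℕ → ℕ
  | 0 => 2
  | n + 1 => sylvester n * (sylvester n - 1) + 1

lemma sylvester_odd (n : ℕ) (hn : 1 ≤ n) : Odd (sylvester n) := by
  obtain ⟨m, rfl⟩ := Nat.exists_eq_succ_of_ne_zero (by omega : n ≠ 0)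
  show Odd (sylvester m * (sylvester m - 1) + 1)
  rcases Nat.even_or_odd (sylvester m) with h | h
  · exact (h.mul_right _).add_one
  · exact ((Nat.Odd.sub_odd h odd_one).mul_left _).add_one

theorem gcd_top_weight_x (n : ℕ) (hn : 2 ≤ n) (A : ℤ)
    (hA : (Even n ∧ 4 * A = (sylvester n : ℤ) ^ 2 - (sylvester n : ℤ) + 2) ∨
          (Odd n ∧ 4 * A = (sylvester n : ℤ) ^ 2 - 3 * (sylvester n : ℤ) + 4)) :
    Int.gcd A (1 + (((sylvester n : ℤ) - 2) * A + ((sylvester n : ℤ) - 1)) + A) = 1 := by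
  set s : ℤ := (sylvester n : ℤ) with hs
  set d : ℕ := Int.gcd A (1 + ((s - 2) * A + (s - 1)) + A) with hd
  have hdA : (d : ℤ) ∣ A := Int.gcd_dvd_left _ _
  have hdx : (d : ℤ) ∣ 1 + ((s - 2) * A + (s - 1)) + A := Int.gcd_dvd_right _ _
  have hds : (d : ℤ) ∣ s := by
    have h := dvd_sub hdx (hdA.mul_left (s - 1))
    have he : 1 + ((s - 2) * A + (s - 1)) + A - (s - 1) * A = s := by ring
    rwa [he] at h
  have hd4 : (d : ℤ) ∣ 4 := by
    have hss : (d : ℤ) ∣ s ^ 2 := hds.pow two_ne_zero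
    rcases hA with ⟨_, h4⟩ | ⟨_, h4⟩
    · have h2 : (d : ℤ) ∣ 2 := by
        have h := dvd_add (dvd_sub (hdA.mul_left 4) hss) hds
        have he : 4 * A - s ^ 2 + s = 2 := by linarith
        rwa [he] at h
      exact h2.trans ⟨2, rfl⟩
    · have h := dvd_add (dvd_sub (hdA.mul_left 4) hss) (hds.mul_left 3)
      have he : 4 * A - s ^ 2 + 3 * s = 4 := by linarith
      rwa [he] at h
  have h2 : ¬ (2 : ℕ) ∣ d := by
    intro h2
    have h2s : (2 : ℤ) ∣ s := dvd_trans (by exact_mod_cast h2) hds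
    rw [hs] at h2s
    have h2n : (2 : ℕ) ∣ sylvester n := by exact_mod_cast h2s
    have := sylvester_odd n (by omega)
    rw [Nat.odd_iff] at this
    omega
  have hd4n : d ∣ 4 := by exact_mod_cast hd4
  clear_value d
  clear * - hd4n h2
  have hle := Nat.le_of_dvd (by norm_num) hd4n
  interval_cases d <;> revert hd4n h2 <;> decide
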